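/- If c > 0 and α, β ∈ ℚπ with sin α sin β ≠ 0 satisfy cosh c = (1 + cos α cos β)/(sin α sin β), then c is transcendental. -/

import Mathlib

open Real

lemma alg_exp_rat_pi (q : ℚ) : IsAlgebraic ℚ (Complex.exp ((q:ℂ) * π * Complex.I)) := by
  refine ⟨Polynomial.X ^ (2 * q.den) - 1, ?_, ?_⟩
  · intro h
    have := congrArg (Polynomial.coeff · (2 * q.den)) h
    simp [Polynomial.coeff_X_pow, q.den_ne_zero, Polynomial.coeff_one] at this
  · have key : ((2 * q.den : ℕ) : ℂ) * ((q:ℂ) * π * Complex.I) = (q.num : ℂ) * (2 * π * Complex.I) := by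
      have h : ((q.den : ℚ) * q : ℚ) = (q.num : ℚ) := by
        exact Rat.den_mul_eq_num q
      have h' : ((q.den : ℂ)) * (q : ℂ) = (q.num : ℂ) := by
        exact_mod_cast congrArg (fun x : ℚ => (x : ℂ)) h
      push_cast
      ring_nf
      rw [h']
      ring
    simp only [map_sub, map_pow, Polynomial.aeval_X, Polynomial.aeval_one]
    rw [← Complex.exp_nat_mul, key, Complex.exp_int_mul_two_pi_mul_I]
    ring

lemma alg_cos_rat_pi (q : ℚ) : IsAlgebraic ℚ (Complex.cos ((q:ℂ) * π)) := by
  have h1 := alg_exp_rat_pi q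
  have h2 := alg_exp_rat_pi (-q)
  have e2 : Complex.exp (((-q : ℚ):ℂ) * π * Complex.I) = Complex.exp (-((q:ℂ) * π) * Complex.I) := by
    push_cast; ring_nf
  rw [e2] at h2
  have : Complex.cos ((q:ℂ) * π)
      = (Complex.exp ((q:ℂ) * π * Complex.I) + Complex.exp (-((q:ℂ) * π) * Complex.I)) * (2:ℂ)⁻¹ := by
    rw [Complex.cos]; ring
  rw [this]
  exact ((h1.isIntegral.add h2.isIntegral).mul ((isAlgebraic_nat (R := ℚ) (A := ℂ) 2).inv).isIntegral).isAlgebraic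

lemma alg_sin_rat_pi (q : ℚ) : IsAlgebraic ℚ (Complex.sin ((q:ℂ) * π)) := by
  have h1 := alg_exp_rat_pi q
  have h2 := alg_exp_rat_pi (-q)
  have e2 : Complex.exp (((-q : ℚ):ℂ) * π * Complex.I) = Complex.exp (-((q:ℂ) * π) * Complex.I) := by
    push_cast; ring_nf
  rw [e2] at h2
  have hI : IsAlgebraic ℚ (Complex.I) := ⟨Polynomial.X ^ 2 + 1, by
    intro h
    have := congrArg (Polynomial.coeff · 2) h
    simp [Polynomial.coeff_one] at this, by simp⟩
  have : Complex.sin ((q:ℂ) * π)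
      = (Complex.exp (-((q:ℂ) * π) * Complex.I) - Complex.exp ((q:ℂ) * π * Complex.I)) * Complex.I * (2:ℂ)⁻¹ := by
    rw [Complex.sin]; ring
  rw [this]
  exact (((h2.isIntegral.sub h1.isIntegral).mul hI.isIntegral).mul
    ((isAlgebraic_nat (R := ℚ) (A := ℂ) 2).inv).isIntegral).isAlgebraic

theorem transcendental_of_ideal_relation
    (lindemann : ∀ (n : ℕ) (α c : Fin n → ℂ), Function.Injective α →
      (∀ i, IsAlgebraic ℚ (α i)) → (∀ i, IsAlgebraic ℚ (c i)) →
      (∑ i, c i * Complex.exp (α i)) = 0 → ∀ i, c i = 0)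
    (α β c : ℝ) (hc : 0 < c)
    (hαQ : ∃ q : ℚ, α = (q : ℝ) * π) (hβQ : ∃ q : ℚ, β = (q : ℝ) * π)
    (hsin : Real.sin α * Real.sin β ≠ 0)
    (hrel : Real.cosh c = (1 + Real.cos α * Real.cos β) / (Real.sin α * Real.sin β)) :
    Transcendental ℚ c := by
  intro hAlg
  obtain ⟨qa, ha⟩ := hαQ
  obtain ⟨qb, hb⟩ := hβQ
  -- cast algebraicity of c to ℂ
  have hcC : IsAlgebraic ℚ ((c : ℂ)) := hAlg.algHom (Complex.ofRealAm.restrictScalars ℚ)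
  -- algebraicity of trig values
  have hca : IsAlgebraic ℚ ((Real.cos α : ℂ)) := by
    rw [ha]
    have : ((Real.cos ((qa:ℝ) * π) : ℂ)) = Complex.cos ((qa:ℂ) * π) := by
      rw [Complex.ofReal_cos]; push_cast; ring_nf
    rw [this]; exact alg_cos_rat_pi qa
  have hcb : IsAlgebraic ℚ ((Real.cos β : ℂ)) := by
    rw [hb]
    have : ((Real.cos ((qb:ℝ) * π) : ℂ)) = Complex.cos ((qb:ℂ) * π) := by
      rw [Complex.ofReal_cos]; push_cast; ring_nf
    rw [this]; exact alg_cos_rat_pi qb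
  have hsa : IsAlgebraic ℚ ((Real.sin α : ℂ)) := by
    rw [ha]
    have : ((Real.sin ((qa:ℝ) * π) : ℂ)) = Complex.sin ((qa:ℂ) * π) := by
      rw [Complex.ofReal_sin]; push_cast; ring_nf
    rw [this]; exact alg_sin_rat_pi qa
  have hsb : IsAlgebraic ℚ ((Real.sin β : ℂ)) := by
    rw [hb]
    have : ((Real.sin ((qb:ℝ) * π) : ℂ)) = Complex.sin ((qb:ℂ) * π) := by
      rw [Complex.ofReal_sin]; push_cast; ring_nf
    rw [this]; exact alg_sin_rat_pi qb
  -- A = cosh c is algebraic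
  have hsb0 : ((Real.sin α : ℂ)) * ((Real.sin β : ℂ)) ≠ 0 := by
    exact_mod_cast fun h => hsin (by exact_mod_cast h)
  have hA : IsAlgebraic ℚ ((Real.cosh c : ℂ)) := by
    have : ((Real.cosh c : ℂ)) = (1 + (Real.cos α : ℂ) * (Real.cos β : ℂ))
        * ((Real.sin α : ℂ) * (Real.sin β : ℂ))⁻¹ := by
      rw [hrel]; push_cast; rw [div_eq_mul_inv]
    rw [this]
    exact (((isAlgebraic_one (R := ℚ) (A := ℂ)).isIntegral.add
      (hca.isIntegral.mul hcb.isIntegral)).mul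
      ((hsa.isIntegral.mul hsb.isIntegral).isAlgebraic.inv).isIntegral).isAlgebraic
  -- Apply Lindemann with exponents c, -c, 0 and coefficients 1, 1, -2 cosh c
  set A : ℂ := (Real.cosh c : ℂ) with hAdef
  have hsum : (∑ i : Fin 3, (![1, 1, -(2*A)] i) * Complex.exp (![(c:ℂ), -(c:ℂ), 0] i)) = 0 := by
    have : A = (Complex.exp (c:ℂ) + Complex.exp (-(c:ℂ))) / 2 := by
      rw [hAdef, Complex.ofReal_cosh, Complex.cosh]
    simp [Fin.sum_univ_three, this]
    ring
  have hinj : Function.Injective ![(c:ℂ), -(c:ℂ), 0] := by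
    have h1 : (c:ℂ) ≠ -(c:ℂ) := by
      intro h
      have : c = -c := by exact_mod_cast h
      linarith
    have h2 : (c:ℂ) ≠ 0 := by exact_mod_cast hc.ne'
    have h3 : -(c:ℂ) ≠ 0 := by simpa using h2
    intro i j hij
    fin_cases i <;> fin_cases j <;>
      first
        | rfl
        | exact absurd hij h1
        | exact absurd hij.symm h1
        | exact absurd hij h2
        | exact absurd hij.symm h2
        | exact absurd hij h3
        | exact absurd hij.symm h3
  have := lindemann 3 ![(c:ℂ), -(c:ℂ), 0] ![1, 1, -(2*A)] hinj
    (by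
      intro i; fin_cases i
      · exact hcC
      · simpa using hcC.isIntegral.neg.isAlgebraic
      · exact isAlgebraic_zero)
    (by
      intro i; fin_cases i
      · exact isAlgebraic_one
      · exact isAlgebraic_one
      · exact (((isAlgebraic_nat (R := ℚ) (A := ℂ) 2).isIntegral.mul hA.isIntegral).neg).isAlgebraic)
    hsum 0
  simp at this
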